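/- Let (Y,Z) be a dual pair, C, D ⊆ Y weakly closed cones and B₁, B₂ ⊆ Y weakly closed convex sets containing zero. If Z is conormal with respect to the one-sided polars, i.e., B₁° ⊆ (B₂° ∩ C°) + D°, then Y is normal with respect to (C,D,B₁,B₂), i.e., (B₂ + C) ∩ D ⊆ B₁. -/

import Mathlib

open Pointwise

/-- The one-sided polar of a subset `A ⊆ Y` in the dual pair `(Y,Z)` given by `B`. -/
def onesidedPolar {Y Z : Type*} [AddCommGroup Y] [Module ℝ Y] [AddCommGroup Z] [Module ℝ Z]
    (B : Y →ₗ[ℝ] Z →ₗ[ℝ] ℝ) (A : Set Y) : Set Z :=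
  {z : Z | ∀ a ∈ A, B a z ≤ 1}


/-- Every continuous linear functional on `WeakBilin B` is represented by some `z : Z`. -/
lemma weakBilin_dual_repr {Y Z : Type*} [AddCommGroup Y] [Module ℝ Y] [AddCommGroup Z]
    [Module ℝ Z] (B : Y →ₗ[ℝ] Z →ₗ[ℝ] ℝ) (f : WeakBilin B →L[ℝ] ℝ) :
    ∃ z : Z, ∀ y : Y, f y = B y z := by
  have h0 : (f : WeakBilin B →ₗ[ℝ] ℝ) 0 = 0 := map_zero _
  have hmem : f ⁻¹' Metric.ball 0 1 ∈ nhds (0 : WeakBilin B) := by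
    have := f.continuous.continuousAt (x := (0 : WeakBilin B))
    exact this (by simp [Metric.ball_mem_nhds])
  obtain ⟨U, hU, hUsub⟩ := (B.hasBasis_weakBilin.mem_iff).1 hmem
  obtain ⟨s, r, hr, rfl⟩ := B.toSeminormFamily.basisSets_iff.1 hU
  -- kernel inclusion
  have hker : (⨅ i : s, LinearMap.ker (B.flip (i : Z))) ≤
      LinearMap.ker (f : WeakBilin B →ₗ[ℝ] ℝ) := by
    intro y hy
    simp only [Submodule.mem_iInf, LinearMap.mem_ker] at hy ⊢
    by_contra hfy
    have hfy' : (0 : ℝ) < |f y| := abs_pos.2 hfy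
    set t : ℝ := 2 / |f y| with ht
    have hty : t • y ∈ (s.sup B.toSeminormFamily).ball 0 r := by
      rw [Seminorm.mem_ball_zero]
      apply Seminorm.finset_sup_apply_lt hr
      intro i hi
      have hyi : B y (i : Z) = 0 := hy ⟨i, hi⟩
      simp [LinearMap.toSeminormFamily, LinearMap.toSeminorm_apply, map_smul, hyi, hr]
    have := hUsub hty
    change f (t • y) ∈ Metric.ball 0 1 at this; rw [Metric.mem_ball, dist_zero_right, Real.norm_eq_abs] at this
    have hfs : f (t • y) = t * f y := by erw [map_smul]; rfl
    rw [hfs, abs_mul, ht, abs_div] at this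
    simp only [abs_two, abs_abs] at this
    rw [div_mul_cancel₀] at this
    · norm_num at this
    · exact hfy'.ne'
  have hspan := mem_span_of_iInf_ker_le_ker (L := fun i : s => B.flip (i : Z))
    (K := (f : WeakBilin B →ₗ[ℝ] ℝ)) hker
  obtain ⟨c, hc⟩ := (Finsupp.mem_span_range_iff_exists_finsupp).1 hspan
  refine ⟨c.sum fun i a => a • (i : Z), fun y => ?_⟩
  have := LinearMap.congr_fun hc y
  simp only [Finsupp.sum, LinearMap.coe_sum, Finset.sum_apply, LinearMap.smul_apply,
    LinearMap.flip_apply, smul_eq_mul, ContinuousLinearMap.coe_coe] at this ⊢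
  rw [map_sum]
  simp only [map_smul, smul_eq_mul]
  exact this.symm

/-- If `Z` is conormal w.r.t. the one-sided polars, i.e.
`B₁° ⊆ (B₂° ∩ C°) + D°`, then `Y` is normal w.r.t. `(C,D,B₁,B₂)`, i.e.
`(B₂ + C) ∩ D ⊆ B₁`. -/
theorem normal_of_conormal_polars
    {Y Z : Type*} [AddCommGroup Y] [Module ℝ Y] [AddCommGroup Z] [Module ℝ Z]
    (B : Y →ₗ[ℝ] Z →ₗ[ℝ] ℝ)
    (hsepY : ∀ y : Y, (∀ z : Z, B y z = 0) → y = 0)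
    (hsepZ : ∀ z : Z, (∀ y : Y, B y z = 0) → z = 0)
    (C D B₁ B₂ : Set Y)
    (hCcl : IsClosed (X := WeakBilin B) C) (hCne : C.Nonempty)
    (hCadd : C + C ⊆ C) (hCsmul : ∀ l : ℝ, 0 ≤ l → l • C ⊆ C)
    (hDcl : IsClosed (X := WeakBilin B) D) (hDne : D.Nonempty)
    (hDadd : D + D ⊆ D) (hDsmul : ∀ l : ℝ, 0 ≤ l → l • D ⊆ D)
    (hB₁cl : IsClosed (X := WeakBilin B) B₁) (hB₁conv : Convex ℝ B₁) (hB₁0 : (0 : Y) ∈ B₁)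
    (hB₂cl : IsClosed (X := WeakBilin B) B₂) (hB₂conv : Convex ℝ B₂) (hB₂0 : (0 : Y) ∈ B₂)
    (hconormal : onesidedPolar B B₁ ⊆ (onesidedPolar B B₂ ∩ onesidedPolar B C) + onesidedPolar B D) :
    (B₂ + C) ∩ D ⊆ B₁ := by
  -- elements of a cone pair nonpositively with elements of its polar
  have key : ∀ (K : Set Y), (∀ l : ℝ, 0 ≤ l → l • K ⊆ K) →
      ∀ w ∈ K, ∀ ζ ∈ onesidedPolar B K, B w ζ ≤ 0 := by
    intro K hKs w hw ζ hζ
    by_contra hpos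
    push_neg at hpos
    set l : ℝ := 2 / B w ζ with hl
    have hl0 : 0 ≤ l := by positivity
    have hlw : l • w ∈ K := hKs l hl0 ⟨w, hw, rfl⟩
    have := hζ _ hlw
    rw [map_smul, LinearMap.smul_apply, smul_eq_mul, hl, div_mul_cancel₀ _ hpos.ne'] at this
    norm_num at this
  rintro y ⟨hyBC, hyD⟩
  obtain ⟨b, hb, c, hc, rfl⟩ := hyBC
  by_contra hyB₁
  obtain ⟨f, u, hfu, huf⟩ := geometric_hahn_banach_closed_point (E := WeakBilin B)
    (x := (b + c : Y)) hB₁conv hB₁cl hyB₁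
  have hu0 : 0 < u := by simpa using hfu 0 hB₁0
  obtain ⟨z₀, hz₀⟩ := weakBilin_dual_repr B f
  set z : Z := u⁻¹ • z₀ with hz
  have hBz : ∀ w : Y, B w z = u⁻¹ * f w := by
    intro w
    rw [hz, map_smul, smul_eq_mul, hz₀]
  have hzB₁ : z ∈ onesidedPolar B B₁ := by
    intro a ha
    rw [hBz]
    calc u⁻¹ * f a ≤ u⁻¹ * u := by
          exact mul_le_mul_of_nonneg_left (hfu a ha).le (inv_nonneg.2 hu0.le)
      _ = 1 := inv_mul_cancel₀ hu0.ne'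
  obtain ⟨z₁, hz₁, z₂, hz₂, hsum⟩ := hconormal hzB₁
  have h1 : B (b + c) (z₁ + z₂) = B b z₁ + B c z₁ + B (b + c) z₂ := by
    simp only [map_add, LinearMap.add_apply]
  have hb1 : B b z₁ ≤ 1 := hz₁.1 b hb
  have hc1 : B c z₁ ≤ 0 := key C hCsmul c hc z₁ hz₁.2
  have hd1 : B (b + c) z₂ ≤ 0 := key D hDsmul (b + c) hyD z₂ hz₂
  have hgt : 1 < B (b + c) (z₁ + z₂) := by
    have hsum' : z₁ + z₂ = z := hsum
    rw [hsum', hBz]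
    have : u⁻¹ * u < u⁻¹ * f (b + c) :=
      mul_lt_mul_of_pos_left huf (inv_pos.2 hu0)
    rwa [inv_mul_cancel₀ hu0.ne'] at this
  linarith
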